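/- Let A − I be an M-matrix and b ∈ ℝ^n. The generalized Newton method x^{k+1} = (A − D(x^k))⁻¹ b, started from any x^0 ∈ ℝ^n, reaches an exact solution of Ax − |x| = b in at most 2n + 2 iterations. -/

import Mathlib

open Matrix

def IsZMatrix {n : ℕ} (A : Matrix (Fin n) (Fin n) ℝ) : Prop :=
  ∀ i j, i ≠ j → A i j ≤ 0

/-- An M-matrix: a Z-matrix that is invertible with entrywise nonnegative inverse. -/
def IsMMatrix {n : ℕ} (A : Matrix (Fin n) (Fin n) ℝ) : Prop :=
  IsZMatrix A ∧ IsUnit A ∧ ∀ i j, 0 ≤ A⁻¹ i j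

/-- D(x) = diag(sign(x)). -/
noncomputable def signD {n : ℕ} (x : Fin n → ℝ) : Matrix (Fin n) (Fin n) ℝ :=
  Matrix.diagonal (fun i => Real.sign (x i))

/-- Componentwise absolute value. -/
def absVec {n : ℕ} (x : Fin n → ℝ) : Fin n → ℝ := fun i => |x i|

/-- Spectral (operator 2-) norm of a matrix. -/
noncomputable def specNorm {n : ℕ} (A : Matrix (Fin n) (Fin n) ℝ) : ℝ :=
  ‖Matrix.toEuclideanCLM (𝕜 := ℝ) A‖

namespace Stmt10Aux

lemma sign_cases (r : ℝ) : Real.sign r = -1 ∨ Real.sign r = 0 ∨ Real.sign r = 1 := by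
  rcases lt_trichotomy r 0 with h | h | h
  · exact Or.inl (Real.sign_of_neg h)
  · subst h; exact Or.inr (Or.inl Real.sign_zero)
  · exact Or.inr (Or.inr (Real.sign_of_pos h))

lemma sign_le_one (r : ℝ) : Real.sign r ≤ 1 := by
  rcases sign_cases r with h | h | h <;> rw [h] <;> norm_num

lemma neg_one_le_sign (r : ℝ) : -1 ≤ Real.sign r := by
  rcases sign_cases r with h | h | h <;> rw [h] <;> norm_num

lemma sign_mono {a b : ℝ} (h : a ≤ b) : Real.sign a ≤ Real.sign b := by
  rcases lt_trichotomy a 0 with ha | ha | ha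
  · rw [Real.sign_of_neg ha]; exact neg_one_le_sign b
  · subst ha
    rw [Real.sign_zero]
    rcases lt_or_eq_of_le h with hb | hb
    · rw [Real.sign_of_pos hb]; norm_num
    · rw [← hb, Real.sign_zero]
  · rw [Real.sign_of_pos ha, Real.sign_of_pos (lt_of_lt_of_le ha h)]

lemma sign_mul_self (r : ℝ) : Real.sign r * r = |r| := by
  rcases lt_trichotomy r 0 with h | h | h
  · rw [Real.sign_of_neg h, abs_of_neg h]; ring
  · subst h; simp
  · rw [Real.sign_of_pos h, abs_of_pos h]; ring

lemma mul_le_abs {s a : ℝ} (h1 : -1 ≤ s) (h2 : s ≤ 1) : s * a ≤ |a| := by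
  rcases le_or_gt 0 a with ha | ha
  · calc s * a ≤ 1 * a := mul_le_mul_of_nonneg_right h2 ha
    _ = |a| := by rw [one_mul, abs_of_nonneg ha]
  · calc s * a ≤ (-1) * a := by nlinarith
    _ = |a| := by rw [abs_of_neg ha]; ring

lemma sign_step {a b : ℝ} (hle : Real.sign a ≤ Real.sign b)
    (hne : Real.sign a ≠ Real.sign b) : Real.sign a + 1 ≤ Real.sign b := by
  rcases sign_cases a with h | h | h <;> rcases sign_cases b with h' | h' | h' <;>
    rw [h, h'] at hle hne ⊢ <;> revert hle hne <;> norm_num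

/-- Key kernel lemma: for a Z-matrix `B` with a strictly positive vector `x`
such that `B x > 0`, any `y` with `B y ≥ 0` satisfies `y ≥ 0`. -/
lemma zmat_nonneg {n : ℕ} (B : Matrix (Fin n) (Fin n) ℝ)
    (hZ : IsZMatrix B) (x : Fin n → ℝ) (hx : ∀ i, 0 < x i)
    (hBx : ∀ i, 0 < B.mulVec x i) (y : Fin n → ℝ)
    (hy : ∀ i, 0 ≤ B.mulVec y i) : ∀ i, 0 ≤ y i := by
  by_contra hcon
  push_neg at hcon
  obtain ⟨i0, hi0⟩ := hcon
  obtain ⟨m, -, hm⟩ := Finset.exists_max_image Finset.univ (fun i => -y i / x i)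
    ⟨i0, Finset.mem_univ _⟩
  set t := -y m / x m with ht
  have ht0 : 0 < t :=
    lt_of_lt_of_le (div_pos (neg_pos.mpr hi0) (hx i0)) (hm i0 (Finset.mem_univ _))
  set z : Fin n → ℝ := y + t • x with hz
  have hz0 : ∀ i, 0 ≤ z i := by
    intro i
    have h1 : -y i / x i ≤ t := hm i (Finset.mem_univ _)
    have h2 : -y i ≤ t * x i := (div_le_iff₀ (hx i)).mp h1
    simp only [hz, Pi.add_apply, Pi.smul_apply, smul_eq_mul]
    linarith
  have hzm : z m = 0 := by
    have h' : t * x m = -y m := div_mul_cancel₀ _ (hx m).ne'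
    have h'' : z m = y m + t * x m := rfl
    rw [h'', h']; ring
  have hpos : 0 < B.mulVec z m := by
    rw [hz, Matrix.mulVec_add, Matrix.mulVec_smul]
    have := hy m
    have := hBx m
    simp only [Pi.add_apply, Pi.smul_apply, smul_eq_mul]
    nlinarith
  have hneg : B.mulVec z m ≤ 0 := by
    rw [Matrix.mulVec, dotProduct]
    apply Finset.sum_nonpos
    intro j _
    rcases eq_or_ne j m with rfl | hjm
    · rw [hzm, mul_zero]
    · exact mul_nonpos_of_nonpos_of_nonneg (hZ m j (Ne.symm hjm)) (hz0 j)
  linarith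

lemma zmat_isUnit {n : ℕ} (B : Matrix (Fin n) (Fin n) ℝ)
    (hZ : IsZMatrix B) (x : Fin n → ℝ) (hx : ∀ i, 0 < x i)
    (hBx : ∀ i, 0 < B.mulVec x i) : IsUnit B.det := by
  rw [isUnit_iff_ne_zero]
  intro hdet
  obtain ⟨v, hv0, hv⟩ := Matrix.exists_mulVec_eq_zero_iff.mpr hdet
  have h1 : ∀ i, 0 ≤ v i := zmat_nonneg B hZ x hx hBx v (by rw [hv]; intro i; simp)
  have h2 : ∀ i, 0 ≤ (-v) i := by
    apply zmat_nonneg B hZ x hx hBx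
    rw [Matrix.mulVec_neg, hv]
    intro i; simp
  exact hv0 (funext fun i => le_antisymm (by simpa using h2 i) (h1 i))

lemma zmat_inv_nonneg {n : ℕ} (B : Matrix (Fin n) (Fin n) ℝ)
    (hZ : IsZMatrix B) (x : Fin n → ℝ) (hx : ∀ i, 0 < x i)
    (hBx : ∀ i, 0 < B.mulVec x i) : ∀ i j, 0 ≤ B⁻¹ i j := by
  intro i j
  have hu : IsUnit B.det := zmat_isUnit B hZ x hx hBx
  have hcol : B.mulVec (B⁻¹.mulVec (Pi.single j 1)) = Pi.single j 1 := by
    rw [Matrix.mulVec_mulVec, Matrix.mul_nonsing_inv B hu, Matrix.one_mulVec]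
  have := zmat_nonneg B hZ x hx hBx (B⁻¹.mulVec (Pi.single j 1))
    (by rw [hcol]; intro i'
        by_cases h' : i' = j <;> simp [Pi.single_apply, h']) i
  simpa using this

end Stmt10Aux

theorem stmt_10 {n : ℕ} (hn : 1 ≤ n) (A : Matrix (Fin n) (Fin n) ℝ)
    (h : IsMMatrix (A - 1)) (b : Fin n → ℝ) (x : ℕ → Fin n → ℝ)
    (hiter : ∀ k, x (k + 1) = (A - signD (x k))⁻¹.mulVec b) :
    ∃ k ≤ 2 * n + 2, A.mulVec (x k) - absVec (x k) = b := by
  classical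
  open Stmt10Aux in
  obtain ⟨hZM, hMU, hMinv⟩ := h
  have hMdet : IsUnit (A - 1).det := (Matrix.isUnit_iff_isUnit_det _).mp hMU
  -- positive vector x0 with (A-1) x0 = 1
  set x0 : Fin n → ℝ := (A - 1)⁻¹.mulVec (fun _ => 1) with hx0def
  have hMx0 : (A - 1).mulVec x0 = fun _ => 1 := by
    rw [hx0def, Matrix.mulVec_mulVec, Matrix.mul_nonsing_inv _ hMdet, Matrix.one_mulVec]
  have hx0 : ∀ i, 0 < x0 i := by
    intro i
    have hsum : x0 i = ∑ j, (A - 1)⁻¹ i j := by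
      simp [hx0def, Matrix.mulVec, dotProduct]
    have hnn : 0 ≤ x0 i := by
      rw [hsum]; exact Finset.sum_nonneg fun j _ => hMinv i j
    rcases lt_or_eq_of_le hnn with hp | hp
    · exact hp
    have hall : ∀ j, (A - 1)⁻¹ i j = 0 := by
      have := (Finset.sum_eq_zero_iff_of_nonneg (fun j _ => hMinv i j)).mp (by
        rw [← hsum, ← hp])
      exact fun j => this j (Finset.mem_univ j)
    have hone : ((A - 1)⁻¹ * (A - 1)) i i = 1 := by
      rw [Matrix.nonsing_inv_mul _ hMdet]; simp
    rw [Matrix.mul_apply] at hone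
    simp [hall] at hone
  -- the iteration matrices
  set B : ℕ → Matrix (Fin n) (Fin n) ℝ := fun k => A - signD (x k) with hBdef
  have hZB : ∀ k, IsZMatrix (B k) := by
    intro k i j hij
    have : B k i j = (A - 1) i j := by
      simp [hBdef, signD, Matrix.sub_apply, Matrix.diagonal_apply_ne _ hij,
        Matrix.one_apply_ne hij]
    rw [this]; exact hZM i j hij
  have hBsplit : ∀ k, B k = (A - 1) + (1 - signD (x k)) := by
    intro k; rw [hBdef]; abel
  have hBx0 : ∀ k i, 0 < (B k).mulVec x0 i := by
    intro k i
    rw [hBsplit, Matrix.add_mulVec]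
    have h1 : (1 - signD (x k) : Matrix (Fin n) (Fin n) ℝ) =
        Matrix.diagonal (fun i => 1 - Real.sign (x k i)) := by
      rw [signD, ← Matrix.diagonal_one, Matrix.diagonal_sub]
    have h2 : (0 : ℝ) ≤ (1 - Real.sign (x k i)) * x0 i :=
      mul_nonneg (by linarith [sign_le_one (x k i)]) (hx0 i).le
    have h3 : (A - 1).mulVec x0 i = 1 := by rw [hMx0]
    rw [Pi.add_apply, h3, h1, Matrix.mulVec_diagonal]
    linarith
  have hBdet : ∀ k, IsUnit (B k).det := fun k =>
    zmat_isUnit (B k) (hZB k) x0 hx0 (hBx0 k)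
  have hsol : ∀ k, (B k).mulVec (x (k + 1)) = b := by
    intro k
    rw [hiter k]
    show Matrix.mulVec (B k) (Matrix.mulVec (B k)⁻¹ b) = b
    rw [Matrix.mulVec_mulVec, Matrix.mul_nonsing_inv _ (hBdet k), Matrix.one_mulVec]
  -- monotonicity of iterates from step 1 on
  have hmono : ∀ j i, x (j + 1) i ≤ x (j + 2) i := by
    intro j i
    have hy : ∀ i, 0 ≤ (B (j + 1)).mulVec (x (j + 2) - x (j + 1)) i := by
      intro i
      rw [Matrix.mulVec_sub]
      have e1 : (B (j + 1)).mulVec (x (j + 2)) = b := hsol (j + 1)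
      have e2 : (B j).mulVec (x (j + 1)) = b := hsol j
      have e3 : (B (j + 1)).mulVec (x (j + 1)) i =
          (B j).mulVec (x (j + 1)) i -
            ((signD (x (j + 1)) - signD (x j)).mulVec (x (j + 1))) i := by
        rw [← Pi.sub_apply, ← Matrix.sub_mulVec]
        congr 2
        simp only [hBdef]; abel
      rw [Pi.sub_apply, e1, e3, e2]
      have e4 : ((signD (x (j + 1)) - signD (x j)).mulVec (x (j + 1))) i =
          (Real.sign (x (j + 1) i) - Real.sign (x j i)) * x (j + 1) i := by
        rw [signD, signD, Matrix.diagonal_sub, Matrix.mulVec_diagonal]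
      rw [e4]
      have h5 : Real.sign (x j i) * x (j + 1) i ≤ |x (j + 1) i| :=
        mul_le_abs (neg_one_le_sign _) (sign_le_one _)
      have h6 : Real.sign (x (j + 1) i) * x (j + 1) i = |x (j + 1) i| :=
        sign_mul_self _
      nlinarith [h5, h6]
    have := zmat_nonneg (B (j + 1)) (hZB (j + 1)) x0 hx0 (hBx0 (j + 1))
      (x (j + 2) - x (j + 1)) hy i
    simpa using this
  have hsgn : ∀ j i, Real.sign (x (j + 1) i) ≤ Real.sign (x (j + 2) i) :=
    fun j i => sign_mono (hmono j i)
  -- pigeonhole on the sum of signs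
  set S : ℕ → ℝ := fun k => ∑ i, Real.sign (x k i) with hSdef
  have hfix : ∃ j ≤ 2 * n, ∀ i, Real.sign (x (j + 1) i) = Real.sign (x (j + 2) i) := by
    by_contra hcon
    push_neg at hcon
    have hstep : ∀ j ≤ 2 * n, S (j + 1) + 1 ≤ S (j + 2) := by
      intro j hj
      obtain ⟨i0, hi0⟩ := hcon j hj
      have key : 1 ≤ S (j + 2) - S (j + 1) := by
        have : S (j + 2) - S (j + 1) =
            ∑ i, (Real.sign (x (j + 2) i) - Real.sign (x (j + 1) i)) := by
          rw [hSdef, Finset.sum_sub_distrib]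
        rw [this]
        calc (1 : ℝ) ≤ Real.sign (x (j + 2) i0) - Real.sign (x (j + 1) i0) := by
              linarith [sign_step (hsgn j i0) hi0]
          _ ≤ ∑ i, (Real.sign (x (j + 2) i) - Real.sign (x (j + 1) i)) :=
              Finset.single_le_sum
                (f := fun i => Real.sign (x (j + 2) i) - Real.sign (x (j + 1) i))
                (fun i _ => by simpa using sub_nonneg.mpr (hsgn j i)) (Finset.mem_univ i0)
      linarith
    have hchain : ∀ m, m ≤ 2 * n + 1 → S 1 + m ≤ S (m + 1) := by
      intro m
      induction m with
      | zero => simp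
      | succ m ih =>
        intro hm
        have h1 : S 1 + m ≤ S (m + 1) := ih (by omega)
        have h2 : S (m + 1) + 1 ≤ S (m + 2) := hstep m (by omega)
        push_cast
        linarith
    have hbound1 : -(n : ℝ) ≤ S 1 := by
      rw [hSdef]
      calc -(n : ℝ) = ∑ _i : Fin n, (-1 : ℝ) := by simp
        _ ≤ ∑ i, Real.sign (x 1 i) :=
          Finset.sum_le_sum fun i _ => neg_one_le_sign _
    have hbound2 : S (2 * n + 2) ≤ (n : ℝ) := by
      rw [hSdef]
      calc ∑ i, Real.sign (x (2 * n + 2) i) ≤ ∑ _i : Fin n, (1 : ℝ) :=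
            Finset.sum_le_sum fun i _ => sign_le_one _
        _ = n := by simp
    have := hchain (2 * n + 1) le_rfl
    push_cast at this
    linarith
  obtain ⟨j, hj, hjsig⟩ := hfix
  refine ⟨j + 2, by omega, ?_⟩
  have hsolj := hsol (j + 1)
  funext i
  have h1 : ((A - signD (x (j + 1))).mulVec (x (j + 2))) i = b i := by
    rw [show A - signD (x (j + 1)) = B (j + 1) from rfl, hsolj]
  rw [Matrix.sub_mulVec, Pi.sub_apply, signD, Matrix.mulVec_diagonal] at h1
  rw [Pi.sub_apply]
  have h2 : Real.sign (x (j + 1) i) * x (j + 2) i = |x (j + 2) i| := by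
    rw [hjsig i, Stmt10Aux.sign_mul_self]
  rw [absVec, ← h2]
  exact h1
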